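/- (Jarník) Let φ and ρ be mutually inverse positive functions on (0,∞) with φ(0) = ρ(0) = 0, such that for some η > 0 the function t ↦ φ(t)·t^{−η} is increasing on (0,∞) and tends to +∞ as t → ∞, and such that φ(αt) > α^η φ(t) for all α > 1 and t > 0. If limsup_{t→∞} φ(t)·ᵗψ(t) < ∞, then there exists a vector α ∈ ℝ^n such that liminf_{t→∞} ρ(t)·ψ^{Θ,α}(t) > 0. -/

import Mathlib

open Filter MeasureTheory

/-- Distance from a real number `t` to the nearest integer, `‖t‖`. -/
noncomputable def distInt (t : ℝ) : ℝ := |t - round t|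

/-- The system of linear forms `L_j(x) = ∑_i Θ_j^i x_i` attached to a matrix. -/
noncomputable def lform {m n : ℕ} (Θ : Matrix (Fin n) (Fin m) ℝ) (x : Fin m → ℤ) (j : Fin n) :
    ℝ := ∑ i, Θ j i * (x i : ℝ)

/-- Sup-norm `max_i |x_i|` of an integer vector, as a real number. -/
noncomputable def supAbs {k : ℕ} (x : Fin k → ℤ) : ℝ := ⨆ i, |(x i : ℝ)|

/-- `ψ^Θ(t)`: the minimum of `max_j ‖L_j(x)‖` over nonzero integer `x` with `max_i |x_i| ≤ t`. -/
noncomputable def psi {m n : ℕ} (Θ : Matrix (Fin n) (Fin m) ℝ) (t : ℝ) : ℝ :=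
  sInf { v | ∃ x : Fin m → ℤ, x ≠ 0 ∧ supAbs x ≤ t ∧ v = ⨆ j, distInt (lform Θ x j) }

/-- `ψ^{Θ,α}(t)`: the inhomogeneous analogue of `ψ^Θ(t)`. -/
noncomputable def psiA {m n : ℕ} (Θ : Matrix (Fin n) (Fin m) ℝ) (α : Fin n → ℝ) (t : ℝ) : ℝ :=
  sInf { v | ∃ x : Fin m → ℤ, x ≠ 0 ∧ supAbs x ≤ t ∧ v = ⨆ j, distInt (lform Θ x j - α j) }

/-- `Θ` is singular: `limsup_{t→∞} t^{m/n} ψ^Θ(t) = 0`. -/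
noncomputable def IsSingular {m n : ℕ} (Θ : Matrix (Fin n) (Fin m) ℝ) : Prop :=
  Filter.limsup (fun t : ℝ => ENNReal.ofReal (t ^ ((m : ℝ) / (n : ℝ)) * psi Θ t))
    Filter.atTop = 0

/-- Property (1) (Khintchine's Chebyshev property). -/
def Chebyshev1 {m n : ℕ} (Θ : Matrix (Fin n) (Fin m) ℝ) : Prop :=
  ∀ α : Fin n → ℝ, ∃ Γ : ℝ, 0 < Γ ∧ ∀ T : ℝ, ∃ x : Fin m → ℤ,
    T ≤ supAbs x ∧
      (⨆ j, distInt (lform Θ x j - α j)) < Γ * (supAbs x) ^ (-(m : ℝ) / (n : ℝ))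

/-- Property (2) (Cassels' version, with `Γ` uniform in `α`). -/
def Chebyshev2 {m n : ℕ} (Θ : Matrix (Fin n) (Fin m) ℝ) : Prop :=
  ∃ Γ : ℝ, 0 < Γ ∧ ∀ α : Fin n → ℝ, ∀ T : ℝ, ∃ x : Fin m → ℤ,
    T ≤ supAbs x ∧
      (⨆ j, distInt (lform Θ x j - α j)) < Γ * (supAbs x) ^ (-(m : ℝ) / (n : ℝ))

/-- `y` is a sequence of best approximations associated to the system of forms of `M`
(for the forms `ᵗL_i` of a matrix `Θ`, apply this to `M = Θᵀ`). -/
def IsBestApproxSeq {p q : ℕ} (M : Matrix (Fin p) (Fin q) ℝ) (y : ℕ → Fin q → ℤ) : Prop :=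
  (∀ ν, y ν ≠ 0) ∧
  StrictMono (fun ν => supAbs (y ν)) ∧
  StrictAnti (fun ν => ⨆ i, distInt (lform M (y ν) i)) ∧
  ∀ ν, ∀ z : Fin q → ℤ, z ≠ 0 → supAbs z < supAbs (y (ν + 1)) →
    (⨆ i, distInt (lform M (y ν) i)) ≤ ⨆ i, distInt (lform M z i)

/-- The constant `K = 2^{-(d-1)} d^{-1/2} σ`, where `σ` is the `(d-1)`-dimensional Hausdorff
measure of the central section `{z ∈ [-1,1]^d : z_1 + ... + z_d = 0}` of the cube. -/
noncomputable def Kconst (d : ℕ) : ℝ :=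
  ((MeasureTheory.Measure.hausdorffMeasure ((d : ℝ) - 1) :
      MeasureTheory.Measure (EuclideanSpace ℝ (Fin d)))
    {z : EuclideanSpace ℝ (Fin d) | (∀ i, |z i| ≤ 1) ∧ ∑ i, z i = 0}).toReal /
    (2 ^ (d - 1) * Real.sqrt d)

/-- `R_{m,n} = max_{0<r<1} r^n (1-r)^m`. -/
noncomputable def Rconst (m n : ℕ) : ℝ :=
  sSup {v : ℝ | ∃ r : ℝ, 0 < r ∧ r < 1 ∧ v = r ^ n * (1 - r) ^ m}

/-- `G_{m,n}(ε) = d^d (m^m n^n)^{d(d-1)} / (ε^d K R)^{d(d-1)}` with `d = m + n`. -/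
noncomputable def Gconst (m n : ℕ) (ε : ℝ) : ℝ :=
  ((m : ℝ) + n) ^ (m + n) * ((m : ℝ) ^ m * (n : ℝ) ^ n) ^ ((m + n) * (m + n - 1)) /
    (ε ^ (m + n) * Kconst (m + n) * Rconst m n) ^ ((m + n) * (m + n - 1))
set_option maxHeartbeats 1000000

section Helpers

lemma distInt_nonneg (t : ℝ) : 0 ≤ distInt t := abs_nonneg _

lemma distInt_le_int (t : ℝ) (N : ℤ) : distInt t ≤ |t - N| := by
  by_cases h : N = round t
  · simp [distInt, h]
  · have h1 : |t - round t| ≤ 1/2 := abs_sub_round t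
    have h2 : (1:ℝ) ≤ |(round t : ℝ) - N| := by
      have : round t - N ≠ 0 := sub_ne_zero.2 (fun hh => h hh.symm)
      have := Int.one_le_abs this
      calc (1:ℝ) ≤ |((round t - N : ℤ) : ℝ)| := by exact_mod_cast this
        _ = |(round t : ℝ) - N| := by push_cast; ring_nf
    have h3 : |(round t : ℝ) - N| ≤ |(round t:ℝ) - t| + |t - N| := abs_sub_le _ _ _
    have h4 : |(round t:ℝ) - t| = |t - round t| := abs_sub_comm _ _
    simp only [distInt]
    linarith
lemma distInt_half (z : ℤ) : distInt ((z:ℝ) + 1/2) = 1/2 := by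
  have hr : round ((z:ℝ) + 1/2) = z + 1 := by
    rw [round_eq]
    have : (z:ℝ) + 1/2 + 1/2 = ((z + 1 : ℤ) : ℝ) := by push_cast; ring
    rw [this, Int.floor_intCast]
  simp only [distInt, hr]
  push_cast
  rw [abs_of_nonpos] <;> ring_nf <;> norm_num
lemma distInt_lip (a b : ℝ) : distInt a ≤ |a - b| + distInt b := by
  have h1 := distInt_le_int a (round b)
  have h2 : |a - round b| ≤ |a - b| + |b - round b| := by
    have := abs_sub_le a b (round b); linarith [this]
  simp only [distInt] at *
  linarith

lemma abs_le_supAbs {k : ℕ} (y : Fin k → ℤ) (i : Fin k) : |(y i : ℝ)| ≤ supAbs y := by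
  unfold supAbs
  exact le_ciSup (Set.finite_range fun i => |(y i : ℝ)|).bddAbove i

lemma supAbs_nonneg {k : ℕ} (y : Fin k → ℤ) : 0 ≤ supAbs y :=
  Real.iSup_nonneg (fun _ => abs_nonneg _)

lemma one_le_supAbs {k : ℕ} {y : Fin k → ℤ} (hy : y ≠ 0) : 1 ≤ supAbs y := by
  obtain ⟨i, hi⟩ := Function.ne_iff.1 hy
  have h1 : (1:ℝ) ≤ |(y i : ℝ)| := by
    have := Int.one_le_abs (show y i ≠ 0 from hi)
    calc (1:ℝ) ≤ ((|y i| : ℤ) : ℝ) := by exact_mod_cast this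
      _ = |(y i : ℝ)| := by push_cast; ring
  exact h1.trans (abs_le_supAbs y i)

noncomputable def fval {p q : ℕ} (M : Matrix (Fin p) (Fin q) ℝ) (y : Fin q → ℤ) : ℝ :=
  ⨆ i, distInt (lform M y i)

lemma fval_nonneg {p q : ℕ} (M : Matrix (Fin p) (Fin q) ℝ) (y : Fin q → ℤ) : 0 ≤ fval M y :=
  Real.iSup_nonneg (fun _ => distInt_nonneg _)

lemma distInt_le_fval {p q : ℕ} (M : Matrix (Fin p) (Fin q) ℝ) (y : Fin q → ℤ) (i : Fin p) :
    distInt (lform M y i) ≤ fval M y := by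
  unfold fval
  exact le_ciSup (Set.finite_range fun i => distInt (lform M y i)).bddAbove i

lemma psi_nonneg {p q : ℕ} (M : Matrix (Fin p) (Fin q) ℝ) (t : ℝ) : 0 ≤ psi M t := by
  apply Real.sInf_nonneg
  rintro x ⟨y, -, -, rfl⟩
  exact Real.iSup_nonneg (fun _ => distInt_nonneg _)

lemma psi_le {p q : ℕ} (M : Matrix (Fin p) (Fin q) ℝ) {t : ℝ} (y : Fin q → ℤ)
    (hy : y ≠ 0) (hyt : supAbs y ≤ t) : psi M t ≤ fval M y := by
  apply csInf_le
  · exact ⟨0, by rintro x ⟨z, -, -, rfl⟩; exact Real.iSup_nonneg (fun _ => distInt_nonneg _)⟩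
  · exact ⟨y, hy, hyt, rfl⟩

lemma psi_attain {p q : ℕ} (hq : 0 < q) (M : Matrix (Fin p) (Fin q) ℝ) (t : ℝ) (ht : 1 ≤ t) :
    ∃ y : Fin q → ℤ, y ≠ 0 ∧ supAbs y ≤ t ∧ fval M y = psi M t := by
  haveI : Nonempty (Fin q) := Fin.pos_iff_nonempty.mp hq
  set S := { v | ∃ x : Fin q → ℤ, x ≠ 0 ∧ supAbs x ≤ t ∧ v = ⨆ j, distInt (lform M x j) } with hS
  have hpsi : psi M t = sInf S := rfl
  set Y : Set (Fin q → ℤ) := {y | y ≠ 0 ∧ supAbs y ≤ t} with hY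
  have hYfin : Y.Finite := by
    apply Set.Finite.subset (Set.Finite.pi (fun _ : Fin q => Set.finite_Icc (-⌈t⌉) ⌈t⌉))
    intro y hy
    intro i _
    simp only [Set.mem_Icc]
    rw [← abs_le]
    have h1 : |(y i : ℝ)| ≤ t := (abs_le_supAbs y i).trans hy.2
    have h2 : ((|y i| : ℤ) : ℝ) ≤ (⌈t⌉ : ℝ) := by
      rw [show ((|y i| : ℤ) : ℝ) = |(y i : ℝ)| by push_cast; ring]
      exact h1.trans (Int.le_ceil t)
    exact_mod_cast h2
  have hSfin : S.Finite := by
    have : S = (fun y => ⨆ j, distInt (lform M y j)) '' Y := by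
      ext w
      constructor
      · rintro ⟨y, h1, h2, rfl⟩; exact ⟨y, ⟨h1, h2⟩, rfl⟩
      · rintro ⟨y, ⟨h1, h2⟩, rfl⟩; exact ⟨y, h1, h2, rfl⟩
    rw [this]
    exact hYfin.image _
  have hSne : S.Nonempty := by
    refine ⟨⨆ j, distInt (lform M (fun _ => 1) j), (fun _ => 1), ?_, ?_, rfl⟩
    · intro h
      have := congrFun h (Classical.arbitrary (Fin q))
      simp at this
    · have : supAbs (fun _ : Fin q => (1:ℤ)) = 1 := by
        simp [supAbs, ciSup_const]
      rw [this]; exact ht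
  have := hSne.csInf_mem hSfin
  rw [← hpsi] at this
  obtain ⟨y, h1, h2, h3⟩ := this
  exact ⟨y, h1, h2, h3.symm⟩

lemma psiA_ge {m n : ℕ} (hm : 0 < m) (Θ : Matrix (Fin n) (Fin m) ℝ) (α : Fin n → ℝ)
    {t b : ℝ} (ht : 1 ≤ t)
    (hb : ∀ x : Fin m → ℤ, x ≠ 0 → supAbs x ≤ t → b ≤ ⨆ j, distInt (lform Θ x j - α j)) :
    b ≤ psiA Θ α t := by
  haveI : Nonempty (Fin m) := Fin.pos_iff_nonempty.mp hm
  apply le_csInf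
  · refine ⟨⨆ j, distInt (lform Θ (fun _ => 1) j - α j), (fun _ => 1), ?_, ?_, rfl⟩
    · intro h
      have := congrFun h (Classical.arbitrary (Fin m))
      simp at this
    · have : supAbs (fun _ : Fin m => (1:ℤ)) = 1 := by simp [supAbs, ciSup_const]
      rw [this]; exact ht
  · rintro w ⟨x, h1, h2, rfl⟩
    exact hb x h1 h2

noncomputable def vChoice {p q : ℕ} (hq : 0 < q) (M : Matrix (Fin p) (Fin q) ℝ) (t : ℝ) :
    Fin q → ℤ :=
  if h : 1 ≤ t then (psi_attain hq M t h).choose else fun _ => 1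

lemma vChoice_spec {p q : ℕ} (hq : 0 < q) (M : Matrix (Fin p) (Fin q) ℝ) {t : ℝ} (ht : 1 ≤ t) :
    vChoice hq M t ≠ 0 ∧ supAbs (vChoice hq M t) ≤ t ∧ fval M (vChoice hq M t) = psi M t := by
  rw [vChoice, dif_pos ht]
  exact (psi_attain hq M t ht).choose_spec

end Helpers

section Cube

lemma exists_far_point {a w : ℝ} (hw : 0 < w) :
    ∃ p : ℝ, |p - a| ≤ w ∧ min (1/4) (w/2) ≤ distInt p := by
  by_cases hw2 : (1:ℝ)/2 ≤ w
  · refine ⟨(⌈a - w - 1/2⌉ : ℝ) + 1/2, ?_, ?_⟩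
    · have h1 : (a - w - 1/2 : ℝ) ≤ ⌈a - w - 1/2⌉ := Int.le_ceil _
      have h2 : (⌈a - w - 1/2⌉ : ℝ) < a - w - 1/2 + 1 := Int.ceil_lt_add_one _
      rw [abs_le]; constructor <;> nlinarith
    · rw [distInt_half]
      exact (min_le_left _ _).trans (by norm_num)
  · push_neg at hw2
    by_cases hda : w/2 ≤ distInt a
    · exact ⟨a, by simp [hw.le], (min_le_right _ _).trans hda⟩
    · push_neg at hda
      refine ⟨a + w, by simp [abs_of_nonneg hw.le, hw.le], ?_⟩
      have hr : |a - round a| < w / 2 := hda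
      have claim : ∀ N : ℤ, min ((1:ℝ)/4) (w/2) ≤ |a + w - N| := by
        intro N
        by_cases hN : N = round a
        · subst hN
          have h1 : w/2 < a + w - round a := by
            have := (abs_lt.1 hr).1; linarith
          calc min ((1:ℝ)/4) (w/2) ≤ w/2 := min_le_right _ _
            _ ≤ |a + w - round a| := h1.le.trans (le_abs_self _)
        · have h2 : (1:ℝ) ≤ |(N : ℝ) - round a| := by
            have : N - round a ≠ 0 := sub_ne_zero.2 (fun hh => hN hh)
            have := Int.one_le_abs this
            calc (1:ℝ) ≤ |((N - round a : ℤ) : ℝ)| := by exact_mod_cast this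
              _ = |(N:ℝ) - round a| := by push_cast; ring_nf
          have h3 : |(N:ℝ) - round a| ≤ |(N:ℝ) - (a + w)| + |a + w - a| + |a - round a| := by
            have t1 : |(N:ℝ) - round a| ≤ |(N:ℝ) - (a+w)| + |(a+w) - (round a:ℝ)| := abs_sub_le _ _ _
            have t2 : |(a+w) - (round a:ℝ)| ≤ |(a+w) - a| + |a - round a| := abs_sub_le _ _ _
            linarith
          have h4 : |a + w - a| = w := by simp [abs_of_nonneg hw.le]
          have h5 : |(N:ℝ) - (a+w)| = |a + w - N| := abs_sub_comm _ _
          have : (1:ℝ)/4 ≤ |a + w - N| := by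
            rw [h4, h5] at h3; linarith
          exact (min_le_left _ _).trans this
      exact claim (round (a + w))

lemma cube_ex {n : ℕ} (hn : 0 < n) (γ : Fin n → ℝ) (s : ℝ) (v : Fin n → ℤ) (hv : v ≠ 0) :
    ∃ P : (Fin n → ℝ) × ℝ,
      0 < s →
      (P.2 = min (s/2) (min (1/4) (supAbs v * s/8) / (n * supAbs v)) ∧
        (∀ i, |P.1 i - γ i| ≤ s/4) ∧
        ∀ α : Fin n → ℝ, (∀ i, |α i - P.1 i| ≤ P.2/2) →
          min (1/4) (supAbs v * s/8) / 2 ≤ distInt (∑ i, (v i:ℝ) * α i)) := by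
  haveI : Nonempty (Fin n) := Fin.pos_iff_nonempty.mp hn
  by_cases hs : 0 < s
  swap
  · exact ⟨(γ, 0), fun h => absurd h hs⟩
  set H := supAbs v with hH
  have hH1 : 1 ≤ H := one_le_supAbs hv
  have hHpos : 0 < H := lt_of_lt_of_le one_pos hH1
  obtain ⟨i₀, -, hmax⟩ := Finset.univ.exists_max_image (fun i => |(v i : ℝ)|) ⟨Classical.arbitrary _, Finset.mem_univ _⟩
  have hi₀ : |(v i₀ : ℝ)| = H := by
    apply le_antisymm (abs_le_supAbs v i₀)
    unfold supAbs
    exact ciSup_le (fun j => hmax j (Finset.mem_univ _))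
  have hvi₀ : (v i₀ : ℝ) ≠ 0 := by
    intro h
    rw [h] at hi₀; simp at hi₀; linarith [hi₀ ▸ hH1]
  set a := ∑ i, (v i : ℝ) * γ i with ha
  set w := H * s / 4 with hw
  have hwpos : 0 < w := by positivity
  obtain ⟨p, hpa, hpd⟩ := exists_far_point (a := a) hwpos
  have hws : H * s / 8 = w / 2 := by rw [hw]; ring
  set τ := (p - a) / (v i₀ : ℝ) with hτ
  have hτle : |τ| ≤ s / 4 := by
    rw [hτ, abs_div, hi₀]
    rw [div_le_iff₀ hHpos]
    calc |p - a| ≤ w := hpa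
      _ = s/4 * H := by rw [hw]; ring
  set γ' := Function.update γ i₀ (γ i₀ + τ) with hγ'
  set s' := min (s/2) (min (1/4) (H * s/8) / (n * H)) with hs'
  have hs'pos : 0 < s' := by
    apply lt_min (by linarith)
    apply div_pos (lt_min (by norm_num) (by positivity)) (by positivity)
  refine ⟨(γ', s'), fun _ => ⟨rfl, ?_, ?_⟩⟩
  · intro i
    dsimp only
    by_cases hii : i = i₀
    · subst hii; rw [hγ', Function.update_self]; simpa using hτle
    · rw [hγ', Function.update_of_ne hii]; simp; linarith
  · intro α hα
    dsimp only at hα ⊢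
    have hsum : ∑ i, (v i : ℝ) * γ' i = p := by
      have hfun : (fun i => (v i : ℝ) * γ' i) = Function.update (fun i => (v i:ℝ) * γ i) i₀ ((v i₀:ℝ) * (γ i₀ + τ)) := by
        funext x
        by_cases hx : x = i₀
        · subst hx; rw [hγ', Function.update_self, Function.update_self]
        · rw [hγ', Function.update_of_ne hx, Function.update_of_ne hx]
      rw [hfun, Finset.sum_update_of_mem (Finset.mem_univ i₀)]
      have hrest : ∑ x ∈ Finset.univ \ {i₀}, (v x:ℝ) * γ x = a - (v i₀:ℝ) * γ i₀ := by
        rw [ha]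
        rw [← Finset.sum_sdiff (Finset.subset_univ {i₀})]
        simp
      rw [hrest]
      have : (v i₀ : ℝ) * τ = p - a := by
        rw [hτ, mul_div_cancel₀ _ hvi₀]
      nlinarith [this]
    have hdiff : |∑ i, (v i:ℝ) * α i - p| ≤ min (1/4) (H * s/8) / 2 := by
      rw [← hsum]
      have : ∑ i, (v i:ℝ) * α i - ∑ i, (v i:ℝ) * γ' i = ∑ i, (v i:ℝ) * (α i - γ' i) := by
        rw [← Finset.sum_sub_distrib]
        congr 1; funext i; ring
      rw [this]
      calc |∑ i, (v i:ℝ) * (α i - γ' i)| ≤ ∑ i, |(v i:ℝ) * (α i - γ' i)| :=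
            Finset.abs_sum_le_sum_abs _ _
        _ ≤ ∑ _i : Fin n, H * (s'/2) := by
            apply Finset.sum_le_sum
            intro i _
            rw [abs_mul]
            apply mul_le_mul (abs_le_supAbs v i) (hα i) (abs_nonneg _) hHpos.le
        _ = n * H * (s'/2) := by
            rw [Finset.sum_const, Finset.card_univ, Fintype.card_fin]
            push_cast; ring
        _ ≤ min (1/4) (H * s/8) / 2 := by
            have h1 : s' ≤ min (1/4) (H * s/8) / (n * H) := min_le_right _ _
            have h2 : (0:ℝ) < n * H := by positivity
            calc (n:ℝ) * H * (s'/2) ≤ (n:ℝ) * H * (min (1/4) (H * s/8) / (n * H) / 2) := by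
                  apply mul_le_mul_of_nonneg_left _ h2.le
                  linarith
              _ = min (1/4) (H * s/8) / 2 := by field_simp
    have hlow := distInt_lip p (∑ i, (v i:ℝ) * α i)
    have habs : |p - ∑ i, (v i:ℝ) * α i| = |∑ i, (v i:ℝ) * α i - p| := abs_sub_comm _ _
    have hmin : min ((1:ℝ)/4) (H * s / 8) ≤ distInt p := by rw [hws]; exact hpd
    linarith

end Cube

section Transfer

lemma exchange_sum {m n : ℕ} (Θ : Matrix (Fin n) (Fin m) ℝ) (y : Fin n → ℤ) (x : Fin m → ℤ) :
    ∑ i, (x i : ℝ) * lform Θ.transpose y i = ∑ j, (y j : ℝ) * lform Θ x j := by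
  simp only [lform, Matrix.transpose_apply, Finset.mul_sum]
  rw [Finset.sum_comm]
  apply Finset.sum_congr rfl
  intro j _
  apply Finset.sum_congr rfl
  intro i _
  ring

lemma transfer {m n : ℕ} (hm : 0 < m) (hn : 0 < n) (Θ : Matrix (Fin n) (Fin m) ℝ)
    (α : Fin n → ℝ) (y : Fin n → ℤ) (x : Fin m → ℤ) :
    distInt (∑ j, (y j : ℝ) * α j) ≤
      m * supAbs x * fval Θ.transpose y
        + n * supAbs y * (⨆ j, distInt (lform Θ x j - α j)) := by
  haveI : Nonempty (Fin m) := Fin.pos_iff_nonempty.mp hm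
  haveI : Nonempty (Fin n) := Fin.pos_iff_nonempty.mp hn
  set ε := ⨆ j, distInt (lform Θ x j - α j) with hε
  have hεle : ∀ j, distInt (lform Θ x j - α j) ≤ ε := fun j =>
    le_ciSup (Set.finite_range fun j => distInt (lform Θ x j - α j)).bddAbove j
  set N : ℤ := (∑ i, x i * round (lform Θ.transpose y i))
      - ∑ j, y j * round (lform Θ x j - α j) with hN
  have key : (∑ j, (y j : ℝ) * α j) - N =
      (∑ i, (x i:ℝ) * (lform Θ.transpose y i - round (lform Θ.transpose y i)))
        - ∑ j, (y j:ℝ) * (lform Θ x j - α j - round (lform Θ x j - α j)) := by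
    have e1 : ∑ i, (x i:ℝ) * (lform Θ.transpose y i - round (lform Θ.transpose y i))
        = (∑ i, (x i:ℝ) * lform Θ.transpose y i)
          - ∑ i, (x i:ℝ) * round (lform Θ.transpose y i) := by
      rw [← Finset.sum_sub_distrib]; apply Finset.sum_congr rfl; intros; ring
    have e2 : ∑ j, (y j:ℝ) * (lform Θ x j - α j - round (lform Θ x j - α j))
        = (∑ j, (y j:ℝ) * lform Θ x j) - (∑ j, (y j:ℝ) * α j)
          - ∑ j, (y j:ℝ) * round (lform Θ x j - α j) := by
      rw [← Finset.sum_sub_distrib, ← Finset.sum_sub_distrib]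
      apply Finset.sum_congr rfl; intros; ring
    have e3 : ((N:ℤ):ℝ) = (∑ i, (x i:ℝ) * round (lform Θ.transpose y i))
        - ∑ j, (y j:ℝ) * round (lform Θ x j - α j) := by
      rw [hN]; push_cast; ring
    rw [e1, e2, e3, exchange_sum Θ y x]
    ring
  have h1 : distInt (∑ j, (y j : ℝ) * α j) ≤ |(∑ j, (y j : ℝ) * α j) - N| :=
    distInt_le_int _ N
  rw [key] at h1
  have h2 : |(∑ i, (x i:ℝ) * (lform Θ.transpose y i - round (lform Θ.transpose y i)))
        - ∑ j, (y j:ℝ) * (lform Θ x j - α j - round (lform Θ x j - α j))|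
      ≤ (∑ i, |(x i:ℝ) * (lform Θ.transpose y i - round (lform Θ.transpose y i))|)
        + ∑ j, |(y j:ℝ) * (lform Θ x j - α j - round (lform Θ x j - α j))| := by
    calc _ ≤ |∑ i, (x i:ℝ) * (lform Θ.transpose y i - round (lform Θ.transpose y i))|
          + |∑ j, (y j:ℝ) * (lform Θ x j - α j - round (lform Θ x j - α j))| := abs_sub _ _
      _ ≤ _ := add_le_add (Finset.abs_sum_le_sum_abs _ _) (Finset.abs_sum_le_sum_abs _ _)
  have h3 : ∑ i, |(x i:ℝ) * (lform Θ.transpose y i - round (lform Θ.transpose y i))|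
      ≤ m * supAbs x * fval Θ.transpose y := by
    calc ∑ i, |(x i:ℝ) * (lform Θ.transpose y i - round (lform Θ.transpose y i))|
        ≤ ∑ _i : Fin m, supAbs x * fval Θ.transpose y := by
          apply Finset.sum_le_sum
          intro i _
          rw [abs_mul]
          exact mul_le_mul (abs_le_supAbs x i) (distInt_le_fval Θ.transpose y i)
            (abs_nonneg _) (supAbs_nonneg x)
      _ = m * supAbs x * fval Θ.transpose y := by
          rw [Finset.sum_const, Finset.card_univ, Fintype.card_fin]; push_cast; ring
  have h4 : ∑ j, |(y j:ℝ) * (lform Θ x j - α j - round (lform Θ x j - α j))|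
      ≤ n * supAbs y * ε := by
    calc ∑ j, |(y j:ℝ) * (lform Θ x j - α j - round (lform Θ x j - α j))|
        ≤ ∑ _j : Fin n, supAbs y * ε := by
          apply Finset.sum_le_sum
          intro j _
          rw [abs_mul]
          exact mul_le_mul (abs_le_supAbs y j) (hεle j) (abs_nonneg _) (supAbs_nonneg y)
      _ = n * supAbs y * ε := by
          rw [Finset.sum_const, Finset.card_univ, Fintype.card_fin]; push_cast; ring
  linarith

end Transfer


/-- **Theorem G (Jarník).** If `limsup_{t→∞} φ(t) ᵗψ(t) < ∞`, then there is `α ∈ ℝ^n`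
with `liminf_{t→∞} ρ(t) ψ^{Θ,α}(t) > 0`. -/
theorem jarnik_singular_to_badly_approximable {m n : ℕ} (hm : 0 < m) (hn : 0 < n)
    (Θ : Matrix (Fin n) (Fin m) ℝ) (φ ρ : ℝ → ℝ)
    (hφpos : ∀ t : ℝ, 0 < t → 0 < φ t) (hρpos : ∀ t : ℝ, 0 < t → 0 < ρ t)
    (hφ0 : φ 0 = 0) (hρ0 : ρ 0 = 0)
    (hinv₁ : ∀ t : ℝ, 0 < t → ρ (φ t) = t) (hinv₂ : ∀ t : ℝ, 0 < t → φ (ρ t) = t)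
    (η : ℝ) (hη : 0 < η)
    (hmono : StrictMonoOn (fun t : ℝ => φ t * t ^ (-η)) (Set.Ioi (0 : ℝ)))
    (htend : Filter.Tendsto (fun t : ℝ => φ t * t ^ (-η)) Filter.atTop Filter.atTop)
    (hgrow : ∀ c : ℝ, 1 < c → ∀ t : ℝ, 0 < t → c ^ η * φ t < φ (c * t))
    (hlim : Filter.limsup (fun t : ℝ => ENNReal.ofReal (φ t * psi Θ.transpose t))
      Filter.atTop < ⊤) :
    ∃ α : Fin n → ℝ,
      0 < Filter.liminf (fun t : ℝ => ENNReal.ofReal (ρ t * psiA Θ α t)) Filter.atTop := by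
  haveI : Nonempty (Fin n) := Fin.pos_iff_nonempty.mp hn
  haveI : Nonempty (Fin m) := Fin.pos_iff_nonempty.mp hm
  -- basic monotonicity toolbox
  have hsplit : ∀ t : ℝ, 0 < t → (φ t * t ^ (-η)) * t ^ η = φ t := by
    intro t ht
    rw [mul_assoc, ← Real.rpow_add ht]
    simp
  have hφlt : ∀ {a b : ℝ}, 0 < a → a < b → φ a < φ b := by
    intro a b ha hab
    have hb : 0 < b := ha.trans hab
    have h1 := hmono (Set.mem_Ioi.2 ha) (Set.mem_Ioi.2 hb) hab
    calc φ a = (φ a * a ^ (-η)) * a ^ η := (hsplit a ha).symm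
      _ < (φ b * b ^ (-η)) * b ^ η := by
          apply mul_lt_mul'' h1 (Real.rpow_lt_rpow ha.le hab hη)
          · exact mul_nonneg (hφpos a ha).le (Real.rpow_nonneg ha.le _)
          · exact Real.rpow_nonneg ha.le _
      _ = φ b := hsplit b hb
  have hφle : ∀ {a b : ℝ}, 0 < a → a ≤ b → φ a ≤ φ b := by
    intro a b ha hab
    rcases eq_or_lt_of_le hab with rfl | h
    · exact le_refl _
    · exact (hφlt ha h).le
  have hρmono : ∀ {a b : ℝ}, 0 < a → a ≤ b → ρ a ≤ ρ b := by
    intro a b ha hab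
    by_contra hlt
    push_neg at hlt
    have hb : 0 < b := lt_of_lt_of_le ha hab
    have := hφlt (hρpos b hb) hlt
    rw [hinv₂ a ha, hinv₂ b hb] at this
    linarith
  have hρge : ∀ {X t : ℝ}, 0 < X → φ X ≤ t → X ≤ ρ t := by
    intro X t hX h
    have := hρmono (hφpos X hX) h
    rwa [hinv₁ X hX] at this
  have hφtop : Tendsto φ atTop atTop := by
    apply tendsto_atTop_mono' atTop (show ∀ᶠ t in atTop, φ t * t ^ (-η) ≤ φ t from ?_) htend
    filter_upwards [eventually_ge_atTop (1:ℝ)] with t ht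
    have ht0 : (0:ℝ) < t := lt_of_lt_of_le one_pos ht
    have h1 : (1:ℝ) ≤ t ^ η := Real.one_le_rpow ht hη.le
    have h2 : 0 ≤ φ t * t ^ (-η) := mul_nonneg (hφpos t ht0).le (Real.rpow_nonneg ht0.le _)
    calc φ t * t ^ (-η) ≤ (φ t * t ^ (-η)) * t ^ η := le_mul_of_one_le_right h2 h1
      _ = φ t := hsplit t ht0
  have hρtop : ∀ M : ℝ, ∀ᶠ t in atTop, M ≤ ρ t := by
    intro M
    filter_upwards [eventually_ge_atTop (φ (max M 1))] with t ht
    have h1 : max M 1 ≤ ρ t := hρge (lt_of_lt_of_le one_pos (le_max_right _ _)) ht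
    exact (le_max_left _ _).trans h1
  have hshrink : ∀ {κ u : ℝ}, 0 < κ → κ ≤ 1 → 0 < u → φ (κ * u) ≤ κ ^ η * φ u := by
    intro κ u hκ hκ1 hu
    rcases eq_or_lt_of_le hκ1 with rfl | hκlt
    · simp [Real.one_rpow]
    · have h1 : (1:ℝ) < 1/κ := by rw [lt_div_iff₀ hκ]; linarith
      have h2 := hgrow (1/κ) h1 (κ * u) (by positivity)
      have h3 : (1/κ) * (κ * u) = u := by field_simp
      rw [h3] at h2
      have h4 : (1/κ) ^ η = (κ ^ η)⁻¹ := by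
        rw [one_div, Real.inv_rpow hκ.le]
      rw [h4] at h2
      have h5 : 0 < κ ^ η := Real.rpow_pos_of_pos hκ η
      calc φ (κ * u) = κ ^ η * ((κ ^ η)⁻¹ * φ (κ * u)) := by field_simp
        _ ≤ κ ^ η * φ u := by
            apply mul_le_mul_of_nonneg_left h2.le h5.le
  -- extract uniform bound from hlim
  obtain ⟨C, hC1, T₀, hT₀1, hCb⟩ :
      ∃ C : ℝ, 1 ≤ C ∧ ∃ T₀ : ℝ, 1 ≤ T₀ ∧ ∀ t, T₀ ≤ t → φ t * psi Θ.transpose t ≤ C := by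
    set L := Filter.limsup (fun t : ℝ => ENNReal.ofReal (φ t * psi Θ.transpose t)) Filter.atTop
      with hL
    have hLtop : L ≠ ⊤ := hlim.ne
    have h1 : L < L + 1 := ENNReal.lt_add_right hLtop one_ne_zero
    have hev := eventually_lt_of_limsup_lt h1
    obtain ⟨a, ha⟩ := eventually_atTop.1 hev
    refine ⟨max ((L+1).toReal) 1, le_max_right _ _, max a 1, le_max_right _ _, ?_⟩
    intro t ht
    have ht1 : (1:ℝ) ≤ t := (le_max_right _ _).trans ht
    have hx : 0 ≤ φ t * psi Θ.transpose t := by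
      apply mul_nonneg (hφpos t (lt_of_lt_of_le one_pos ht1)).le (psi_nonneg _ _)
    have h2 : ENNReal.ofReal (φ t * psi Θ.transpose t) ≤ ENNReal.ofReal ((L+1).toReal) := by
      rw [ENNReal.ofReal_toReal (by finiteness)]
      exact (ha t ((le_max_left _ _).trans ht)).le
    have h3 := (ENNReal.ofReal_le_ofReal_iff ENNReal.toReal_nonneg).1 h2
    exact h3.trans (le_max_left _ _)
  -- main case split
  by_cases hT : ∃ z : Fin n → ℤ, z ≠ 0 ∧ fval Θ.transpose z ≤ 0
  · -- degenerate case: an exact integer relation exists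
    obtain ⟨z, hz, hz0⟩ := hT
    have hzf : fval Θ.transpose z = 0 := le_antisymm hz0 (fval_nonneg _ _)
    obtain ⟨i₀, hi₀'⟩ := Function.ne_iff.1 hz
    have hi₀ : z i₀ ≠ 0 := by simpa using hi₀'
    set α : Fin n → ℝ := fun i => if i = i₀ then (2 * (z i₀ : ℝ))⁻¹ else 0 with hα
    refine ⟨α, ?_⟩
    have hzi₀ : (z i₀ : ℝ) ≠ 0 := by exact_mod_cast hi₀
    have hdot : ∑ j, (z j : ℝ) * α j = 1/2 := by
      rw [hα]
      rw [Finset.sum_eq_single i₀]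
      · simp only [if_pos rfl, eq_self_iff_true, if_true]
        field_simp
      · intro b _ hb
        simp [hb]
      · intro hb
        exact absurd (Finset.mem_univ i₀) hb
    have hdist : distInt (∑ j, (z j : ℝ) * α j) = 1/2 := by
      rw [hdot]
      have := distInt_half 0
      simpa using this
    set ε₀ : ℝ := 1 / (2 * n * supAbs z) with hε₀
    have hsz : 0 < supAbs z := lt_of_lt_of_le one_pos (one_le_supAbs hz)
    have hε₀pos : 0 < ε₀ := by positivity
    have hψ : ∀ t : ℝ, 1 ≤ t → ε₀ ≤ psiA Θ α t := by
      intro t ht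
      apply psiA_ge hm Θ α ht
      intro x hx hxt
      set ε := ⨆ j, distInt (lform Θ x j - α j) with hε
      have h1 := transfer hm hn Θ α z x
      rw [hdist, hzf] at h1
      have h2 : (1:ℝ)/2 ≤ n * supAbs z * ε := by
        have : (m:ℝ) * supAbs x * 0 = 0 := by ring
        rw [this, zero_add] at h1
        exact h1
      rw [hε₀]
      rw [div_le_iff₀ (by positivity)]
      calc (1:ℝ) = 2 * (1/2) := by norm_num
        _ ≤ 2 * (n * supAbs z * ε) := by linarith
        _ = ε * (2 * n * supAbs z) := by ring
    have hev : ∀ᶠ t in atTop, ENNReal.ofReal 1 ≤ ENNReal.ofReal (ρ t * psiA Θ α t) := by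
      filter_upwards [hρtop (1/ε₀), eventually_ge_atTop (1:ℝ)] with t h1 h2
      apply ENNReal.ofReal_le_ofReal
      calc (1:ℝ) = (1/ε₀) * ε₀ := by field_simp
        _ ≤ ρ t * psiA Θ α t := by
            apply mul_le_mul h1 (hψ t h2) hε₀pos.le
            exact le_trans (by positivity) h1
    calc (0:ENNReal) < ENNReal.ofReal 1 := by norm_num
      _ = Filter.liminf (fun _ : ℝ => ENNReal.ofReal 1) Filter.atTop := (Filter.liminf_const _).symm
      _ ≤ _ := Filter.liminf_le_liminf hev
  · -- main case
    push_neg at hT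
    have hNT : ∀ z : Fin n → ℤ, z ≠ 0 → 0 < fval Θ.transpose z := hT
    set Λ : ℝ := 8 * n with hΛ
    have hn1 : (1:ℝ) ≤ n := by exact_mod_cast hn
    have hΛ2 : (2:ℝ) ≤ Λ := by rw [hΛ]; linarith
    have hΛpos : (0:ℝ) < Λ := by linarith
    obtain ⟨B, hB0, hBsucc⟩ : ∃ B : ℕ → ℝ, B 0 = T₀ ∧
        ∀ j, B (j+1) = max (Λ * B j) (ρ (2 * C / psi Θ.transpose (B j))) + 1 := by
      refine ⟨fun j => (fun u => max (Λ * u) (ρ (2 * C / psi Θ.transpose u)) + 1)^[j] T₀,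
        rfl, fun j => ?_⟩
      show (fun u => max (Λ * u) (ρ (2 * C / psi Θ.transpose u)) + 1)^[j+1] T₀ = _
      rw [Function.iterate_succ_apply']
    have hBge : ∀ j, T₀ ≤ B j := by
      intro j
      induction j with
      | zero => exact hB0.ge
      | succ j ih =>
        rw [hBsucc j]
        have h1 : Λ * B j ≤ max (Λ * B j) (ρ (2 * C / psi Θ.transpose (B j))) := le_max_left _ _
        nlinarith
    have hB1 : ∀ j, 1 ≤ B j := fun j => hT₀1.trans (hBge j)
    have hBpos : ∀ j, (0:ℝ) < B j := fun j => lt_of_lt_of_le one_pos (hB1 j)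
    set f : ℕ → ℝ := fun j => psi Θ.transpose (B j) with hf
    obtain ⟨v, hvspec⟩ : ∃ v : ℕ → (Fin n → ℤ),
        ∀ j, v j ≠ 0 ∧ supAbs (v j) ≤ B j ∧ fval Θ.transpose (v j) = f j :=
      ⟨fun j => vChoice hn Θ.transpose (B j),
        fun j => vChoice_spec hn Θ.transpose (hB1 j)⟩
    have hfpos : ∀ j, 0 < f j := by
      intro j
      rw [← (hvspec j).2.2]
      exact hNT _ (hvspec j).1
    have hfC : ∀ j, φ (B j) * f j ≤ C := fun j => hCb (B j) (hBge j)
    have hφBf : ∀ j, φ (B j) ≤ C / f j := by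
      intro j
      rw [le_div_iff₀ (hfpos j)]
      exact hfC j
    set H : ℕ → ℝ := fun j => supAbs (v j) with hH
    have hH1 : ∀ j, 1 ≤ H j := fun j => one_le_supAbs (hvspec j).1
    have hHpos : ∀ j, (0:ℝ) < H j := fun j => lt_of_lt_of_le one_pos (hH1 j)
    have hHB : ∀ j, H j ≤ B j := fun j => (hvspec j).2.1
    have hBΛ : ∀ j, Λ * B j + 1 ≤ B (j+1) := by
      intro j
      rw [hBsucc j]
      have := le_max_left (Λ * B j) (ρ (2 * C / psi Θ.transpose (B j)))
      linarith
    have hB2 : ∀ j, 2 * B j ≤ B (j+1) := by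
      intro j
      have h1 := hBΛ j
      have h2 := hBpos j
      nlinarith
    have hBρ : ∀ j, ρ (2 * C / f j) ≤ B (j+1) := by
      intro j
      rw [hBsucc j]
      have := le_max_right (Λ * B j) (ρ (2 * C / psi Θ.transpose (B j)))
      linarith
    have hBmax : ∀ j, B (j+1) ≤ 2 * max (Λ * B j) (ρ (2 * C / f j)) := by
      intro j
      rw [hBsucc j]
      have h1 : (1:ℝ) ≤ Λ * B j := by
        have := hBpos j
        have := hB1 j
        nlinarith
      have h2 : Λ * B j ≤ max (Λ * B j) (ρ (2 * C / psi Θ.transpose (B j))) := le_max_left _ _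
      linarith
    have hfhalf : ∀ j, f (j+1) ≤ f j / 2 := by
      intro j
      have hu : (0:ℝ) < 2 * C / f j := by
        apply div_pos (by linarith) (hfpos j)
      have hρu : 0 < ρ (2 * C / f j) := hρpos _ hu
      have h1 : φ (ρ (2 * C / f j)) ≤ φ (B (j+1)) := hφle hρu (hBρ j)
      rw [hinv₂ _ hu] at h1
      have h2 : f (j+1) ≤ C / φ (B (j+1)) := by
        rw [le_div_iff₀ (hφpos _ (hBpos (j+1)))]
        calc f (j+1) * φ (B (j+1)) = φ (B (j+1)) * f (j+1) := by ring
          _ ≤ C := hfC (j+1)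
      have h3 : (0:ℝ) < φ (B (j+1)) := hφpos _ (hBpos (j+1))
      calc f (j+1) ≤ C / φ (B (j+1)) := h2
        _ ≤ C / (2 * C / f j) := by
            apply div_le_div_of_nonneg_left (by linarith) (by positivity) h1
        _ = f j / 2 := by
            have hCne : C ≠ 0 := by linarith
            have hfne : f j ≠ 0 := (hfpos j).ne'
            field_simp
    have hHup : ∀ j, B j < H (j+1) := by
      intro j
      by_contra hle
      push_neg at hle
      have h1 : f j ≤ fval Θ.transpose (v (j+1)) := psi_le Θ.transpose (v (j+1)) (hvspec (j+1)).1 hle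
      rw [(hvspec (j+1)).2.2] at h1
      have h2 := hfhalf j
      have h3 := hfpos j
      linarith
    -- nested cubes
    obtain ⟨Γ, hΓ0, hΓspec⟩ : ∃ Γ : ℕ → (Fin n → ℝ) × ℝ, (Γ 0).2 = 1 ∧
        ∀ j, 0 < (Γ j).2 →
        ((Γ (j+1)).2 = min ((Γ j).2/2)
            (min (1/4) (supAbs (v (j+1)) * (Γ j).2/8) / (n * supAbs (v (j+1)))) ∧
          (∀ i, |(Γ (j+1)).1 i - (Γ j).1 i| ≤ (Γ j).2/4) ∧
          ∀ α : Fin n → ℝ, (∀ i, |α i - (Γ (j+1)).1 i| ≤ (Γ (j+1)).2/2) →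
            min (1/4) (supAbs (v (j+1)) * (Γ j).2/8) / 2
              ≤ distInt (∑ i, (v (j+1) i : ℝ) * α i)) := by
      refine ⟨fun j => Nat.rec ((fun _ => (0:ℝ)), (1:ℝ))
        (fun j ih => (cube_ex hn ih.1 ih.2 (v (j+1)) (hvspec (j+1)).1).choose) j, rfl,
        fun j hs => ?_⟩
      exact (cube_ex hn _ _ (v (j+1)) (hvspec (j+1)).1).choose_spec hs
    set β : ℝ := 1 / (8 * n) with hβ
    have hβpos : 0 < β := by rw [hβ]; positivity
    have hn0 : (n:ℝ) ≠ 0 := by positivity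
    have hβ1 : β ≤ 1 := by
      rw [hβ, div_le_one (by positivity)]
      linarith
    have hinvar : ∀ j, 0 < (Γ j).2 ∧ β / B j ≤ (Γ j).2 := by
      intro j
      induction j with
      | zero =>
        constructor
        · rw [hΓ0]; norm_num
        · rw [hΓ0, hB0]
          rw [div_le_one (by linarith : (0:ℝ) < T₀)]
          linarith
      | succ j ih =>
        obtain ⟨hsp, -, -⟩ := hΓspec j ih.1
        have hH' : supAbs (v (j+1)) = H (j+1) := rfl
        rw [hH'] at hsp
        have hHj1 : 0 < H (j+1) := hHpos (j+1)
        have hnH : (0:ℝ) < n * H (j+1) := by positivity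
        constructor
        · rw [hsp]
          apply lt_min (by linarith [ih.1])
          apply div_pos (lt_min (by norm_num) (by nlinarith [ih.1, hHj1])) hnH
        · rw [hsp]
          apply le_min
          · have h2Bj : (0:ℝ) < 2 * B j := by linarith [hBpos j]
            have hstep1 : β / B (j+1) ≤ β / (2 * B j) :=
              div_le_div_of_nonneg_left hβpos.le h2Bj (hB2 j)
            have hβB : β ≤ (Γ j).2 * B j := (div_le_iff₀ (hBpos j)).1 ih.2
            have hstep2 : β / (2 * B j) ≤ (Γ j).2 / 2 := by
              rw [div_le_div_iff₀ h2Bj (by norm_num : (0:ℝ) < 2)]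
              nlinarith [hBpos j]
            exact hstep1.trans hstep2
          · rw [le_div_iff₀ hnH]
            apply le_min
            · -- β / B (j+1) * (n * H (j+1)) ≤ 1/4  since H (j+1) ≤ B (j+1), β*n = 1/8
              have h1 : β * (n:ℝ) = 1/8 := by
                rw [hβ]
                field_simp
              have h2 : H (j+1) ≤ B (j+1) := hHB (j+1)
              have h3 : (0:ℝ) < B (j+1) := hBpos (j+1)
              calc β / B (j+1) * (n * H (j+1)) = (β * n) * (H (j+1) / B (j+1)) := by ring
                _ ≤ (1/8) * 1 := by
                    rw [h1]
                    apply mul_le_mul_of_nonneg_left _ (by norm_num)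
                    rw [div_le_one h3]
                    exact h2
                _ ≤ 1/4 := by norm_num
            · -- β / B (j+1) * (n * H (j+1)) ≤ H (j+1) * (Γ j).2 / 8
              have h1 : (8:ℝ) * n * β = 1 := by
                rw [hβ]
                field_simp
              have h2 : 1 / B (j+1) ≤ β / B j := by
                rw [div_le_div_iff₀ (hBpos (j+1)) (hBpos j)]
                have hβΛ : β * Λ = 1 := by
                  rw [hβ, hΛ]
                  field_simp
                calc 1 * B j = β * (Λ * B j) := by
                      rw [← mul_assoc, hβΛ]
                  _ ≤ β * B (j+1) := by
                      apply mul_le_mul_of_nonneg_left _ hβpos.le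
                      have := hBΛ j
                      linarith
              have h3 : 1 / B (j+1) ≤ (Γ j).2 := h2.trans ih.2
              calc β / B (j+1) * (n * H (j+1)) = (H (j+1) / 8) * ((8 * n * β) * (1 / B (j+1))) := by
                    ring
                _ ≤ (H (j+1) / 8) * (Γ j).2 := by
                    apply mul_le_mul_of_nonneg_left _ (by linarith [hHpos (j+1)])
                    rw [h1, one_mul]
                    exact h3
                _ = H (j+1) * (Γ j).2 / 8 := by ring
    set δ : ℝ := 1 / (128 * n) with hδ
    have hδpos : 0 < δ := by rw [hδ]; positivity
    have hprot : ∀ j, ∀ α : Fin n → ℝ,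
        (∀ i, |α i - (Γ (j+1)).1 i| ≤ (Γ (j+1)).2/2) →
        δ ≤ distInt (∑ i, (v (j+1) i : ℝ) * α i) := by
      intro j α hα
      obtain ⟨-, -, hp⟩ := hΓspec j (hinvar j).1
      have h1 := hp α hα
      have hHv : supAbs (v (j+1)) = H (j+1) := rfl
      rw [hHv] at h1
      have h2 : β ≤ H (j+1) * (Γ j).2 := by
        have hBH := (hHup j).le
        have hβB : β ≤ (Γ j).2 * B j := (div_le_iff₀ (hBpos j)).1 (hinvar j).2
        have hΓpos := (hinvar j).1
        nlinarith [hBpos j]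
      have h3 : β / 8 ≤ min (1/4) (H (j+1) * (Γ j).2/8) := by
        apply le_min
        · linarith [hβ1]
        · linarith
      have h4 : δ ≤ min (1/4) (H (j+1) * (Γ j).2/8) / 2 := by
        have hδβ : δ = (β/8)/2 := by rw [hδ, hβ]; ring
        rw [hδβ]
        linarith
      exact h4.trans h1
    have hhalf : ∀ j, (Γ (j+1)).2 ≤ (Γ j).2 / 2 := by
      intro j
      obtain ⟨hsp, -, -⟩ := hΓspec j (hinvar j).1
      rw [hsp]
      exact min_le_left _ _
    have hγstep : ∀ j i, |(Γ (j+1)).1 i - (Γ j).1 i| ≤ (Γ j).2 / 4 := by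
      intro j
      obtain ⟨-, hg, -⟩ := hΓspec j (hinvar j).1
      exact hg
    have hsgeo : ∀ j, (Γ j).2 ≤ (1/2) ^ j := by
      intro j
      induction j with
      | zero => rw [hΓ0]; norm_num
      | succ j ih =>
        calc (Γ (j+1)).2 ≤ (Γ j).2 / 2 := hhalf j
          _ ≤ (1/2)^j / 2 := by linarith
          _ = (1/2)^(j+1) := by rw [pow_succ]; ring
    have hstail : ∀ j l, (Γ (j+l)).2 ≤ (Γ j).2 * (1/2)^l := by
      intro j l
      induction l with
      | zero => simp
      | succ l ih =>
        have h1 := hhalf (j+l)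
        calc (Γ (j+(l+1))).2 = (Γ ((j+l)+1)).2 := by ring_nf
          _ ≤ (Γ (j+l)).2 / 2 := h1
          _ ≤ ((Γ j).2 * (1/2)^l) / 2 := by linarith
          _ = (Γ j).2 * (1/2)^(l+1) := by rw [pow_succ]; ring
    have hγtail : ∀ j l i, |(Γ (j+l)).1 i - (Γ j).1 i| ≤ (Γ j).2 / 2 * (1 - (1/2)^l) := by
      intro j l i
      induction l with
      | zero => simp
      | succ l ih =>
        have h1 : |(Γ (j+(l+1))).1 i - (Γ (j+l)).1 i| ≤ (Γ (j+l)).2 / 4 := by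
          have := hγstep (j+l) i
          have he : j + (l+1) = (j+l)+1 := by ring
          rw [he]
          exact this
        have h2 : (Γ (j+l)).2 ≤ (Γ j).2 * (1/2)^l := hstail j l
        have h3 : |(Γ (j+(l+1))).1 i - (Γ j).1 i|
            ≤ |(Γ (j+(l+1))).1 i - (Γ (j+l)).1 i| + |(Γ (j+l)).1 i - (Γ j).1 i| := by
          have := abs_sub_le ((Γ (j+(l+1))).1 i) ((Γ (j+l)).1 i) ((Γ j).1 i)
          linarith
        have h4 : (0:ℝ) < (1/2:ℝ)^l := by positivity
        calc |(Γ (j+(l+1))).1 i - (Γ j).1 i|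
            ≤ (Γ (j+l)).2 / 4 + (Γ j).2 / 2 * (1 - (1/2)^l) := by linarith
          _ ≤ (Γ j).2 * (1/2)^l / 4 + (Γ j).2 / 2 * (1 - (1/2)^l) := by linarith
          _ = (Γ j).2 / 2 * (1 - (1/2)^(l+1)) := by rw [pow_succ]; ring
    -- limit point
    have hαex : ∀ i : Fin n, ∃ L : ℝ, ∀ j, |L - (Γ j).1 i| ≤ (Γ j).2 / 2 := by
      intro i
      have hcau : CauchySeq (fun j => (Γ j).1 i) := by
        apply cauchySeq_of_le_geometric (1/2 : ℝ) (1/4 : ℝ) (by norm_num)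
        intro j
        rw [Real.dist_eq]
        have h1 : |(Γ j).1 i - (Γ (j+1)).1 i| = |(Γ (j+1)).1 i - (Γ j).1 i| := abs_sub_comm _ _
        rw [h1]
        calc |(Γ (j+1)).1 i - (Γ j).1 i| ≤ (Γ j).2 / 4 := hγstep j i
          _ ≤ (1/2)^j / 4 := by linarith [hsgeo j]
          _ = 1/4 * (1/2)^j := by ring
      obtain ⟨L, hL⟩ := cauchySeq_tendsto_of_complete hcau
      refine ⟨L, fun j => ?_⟩
      have hshift : Tendsto (fun l => (Γ (j+l)).1 i) atTop (nhds L) := by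
        have := hL.comp (tendsto_add_atTop_nat j)
        exact this.congr (fun l => by simp only [Function.comp_apply, Nat.add_comm])
      have hbnd : ∀ l, |(Γ (j+l)).1 i - (Γ j).1 i| ≤ (Γ j).2 / 2 := by
        intro l
        have h1 := hγtail j l i
        have h2 : (0:ℝ) ≤ (1/2:ℝ)^l := by positivity
        have h3 : (0:ℝ) < (Γ j).2 := (hinvar j).1
        nlinarith
      have htt : Tendsto (fun l => |(Γ (j+l)).1 i - (Γ j).1 i|) atTop
          (nhds (|L - (Γ j).1 i|)) := by
        apply Tendsto.abs
        exact hshift.sub_const _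
      exact le_of_tendsto htt (Filter.Eventually.of_forall hbnd)
    choose α hα using hαex
    have hmemb : ∀ j i, |α i - (Γ j).1 i| ≤ (Γ j).2 / 2 := fun j i => hα i j
    have hprotα : ∀ j, δ ≤ distInt (∑ i, (v (j+1) i : ℝ) * α i) := by
      intro j
      exact hprot j α (fun i => hmemb (j+1) i)
    -- constants for the covering argument
    have hmC : (0:ℝ) < 4 * m * C := by
      have : (1:ℝ) ≤ m := by exact_mod_cast hm
      nlinarith
    set κ : ℝ := min 1 ((δ / (4 * m * C)) ^ (1/η)) with hκ
    have hδmC : (0:ℝ) < δ / (4 * m * C) := div_pos hδpos hmC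
    have hκpos : 0 < κ := lt_min one_pos (Real.rpow_pos_of_pos hδmC _)
    have hκ1 : κ ≤ 1 := min_le_left _ _
    have hκη : κ ^ η ≤ δ / (4 * m * C) := by
      rcases min_cases 1 ((δ / (4 * m * C)) ^ (1/η)) with ⟨hmin, hle⟩ | ⟨hmin, hle⟩
      · -- κ = 1 and 1 ≤ (δ/(4mC))^(1/η)
        rw [hκ, hmin, Real.one_rpow]
        have h1 : (1:ℝ) ^ η ≤ ((δ / (4*m*C)) ^ (1/η)) ^ η :=
          Real.rpow_le_rpow (by norm_num) hle hη.le
        rw [Real.one_rpow, ← Real.rpow_mul hδmC.le, one_div, inv_mul_cancel₀ hη.ne',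
          Real.rpow_one] at h1
        exact h1
      · rw [hκ, hmin, ← Real.rpow_mul hδmC.le, one_div, inv_mul_cancel₀ hη.ne',
          Real.rpow_one]
    set K : ℝ := κ / (2 * Λ) with hK
    have hKpos : 0 < K := div_pos hκpos (by linarith)
    set c : ℝ := δ * κ / (4 * n * Λ) with hc
    have hcpos : 0 < c := by
      apply div_pos (mul_pos hδpos hκpos)
      positivity
    have hcK : c / K = δ / (2 * n) := by
      rw [hc, hK]
      have hΛ0 : Λ ≠ 0 := by linarith
      field_simp
      ring
    set A : ℕ → ℝ := fun j => φ (K * H j) with hA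
    have hKH : ∀ j, (0:ℝ) < K * H j := fun j => mul_pos hKpos (hHpos j)
    -- the chaining inequality
    have hchain : ∀ j, A (j+1) ≤ δ / (2 * m * f j) := by
      intro j
      have hfj := hfpos j
      have hm1 : (1:ℝ) ≤ m := by exact_mod_cast hm
      have hKB : K * H (j+1) ≤ K * B (j+1) :=
        mul_le_mul_of_nonneg_left (hHB (j+1)) hKpos.le
      have hu : (0:ℝ) < 2 * C / f j := div_pos (by linarith) hfj
      have hρu : 0 < ρ (2 * C / f j) := hρpos _ hu
      have h1 : A (j+1) ≤ φ (K * B (j+1)) := hφle (hKH (j+1)) hKB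
      have h2 : K * B (j+1) ≤ max (κ * B j) ((κ/Λ) * ρ (2 * C / f j)) := by
        have h3 := hBmax j
        rcases max_cases (Λ * B j) (ρ (2 * C / f j)) with ⟨hmax, -⟩ | ⟨hmax, -⟩
        · rw [hmax] at h3
          have : K * B (j+1) ≤ K * (2 * (Λ * B j)) :=
            mul_le_mul_of_nonneg_left h3 hKpos.le
          have he : K * (2 * (Λ * B j)) = κ * B j := by
            rw [hK]; field_simp
          rw [he] at this
          exact this.trans (le_max_left _ _)
        · rw [hmax] at h3
          have : K * B (j+1) ≤ K * (2 * ρ (2 * C / f j)) :=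
            mul_le_mul_of_nonneg_left h3 hKpos.le
          have he : K * (2 * ρ (2 * C / f j)) = (κ/Λ) * ρ (2 * C / f j) := by
            rw [hK]; field_simp
          rw [he] at this
          exact this.trans (le_max_right _ _)
      have h4 : φ (max (κ * B j) ((κ/Λ) * ρ (2 * C / f j))) ≤ δ / (2 * m * f j) := by
        have hb1 : φ (κ * B j) ≤ δ / (2 * m * f j) := by
          have h5 : φ (κ * B j) ≤ κ ^ η * φ (B j) := hshrink hκpos hκ1 (hBpos j)
          have h6 : κ ^ η * φ (B j) ≤ (δ / (4 * m * C)) * (C / f j) := by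
            apply mul_le_mul hκη (hφBf j) (hφpos _ (hBpos j)).le hδmC.le
          have h7 : (δ / (4 * m * C)) * (C / f j) = δ / (4 * m * f j) := by
            field_simp
          have h8 : δ / (4 * m * f j) ≤ δ / (2 * m * f j) := by
            apply div_le_div_of_nonneg_left hδpos.le (by positivity)
            nlinarith
          linarith
        have hb2 : φ ((κ/Λ) * ρ (2 * C / f j)) ≤ δ / (2 * m * f j) := by
          have hκΛpos : 0 < κ / Λ := div_pos hκpos (by linarith)
          have hκΛ1 : κ / Λ ≤ 1 := by
            rw [div_le_one (by linarith : (0:ℝ) < Λ)]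
            linarith
          have h5 : φ ((κ/Λ) * ρ (2 * C / f j)) ≤ (κ/Λ) ^ η * φ (ρ (2 * C / f j)) :=
            hshrink hκΛpos hκΛ1 hρu
          rw [hinv₂ _ hu] at h5
          have h6 : (κ/Λ) ^ η ≤ κ ^ η := by
            apply Real.rpow_le_rpow hκΛpos.le _ hη.le
            rw [div_le_iff₀ (by linarith : (0:ℝ) < Λ)]
            nlinarith
          have h7 : (κ/Λ) ^ η * (2 * C / f j) ≤ (δ / (4 * m * C)) * (2 * C / f j) := by
            apply mul_le_mul_of_nonneg_right (h6.trans hκη) hu.le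
          have h8 : (δ / (4 * m * C)) * (2 * C / f j) = δ / (2 * m * f j) := by
            field_simp
            ring
          linarith
        rcases max_cases (κ * B j) ((κ/Λ) * ρ (2 * C / f j)) with ⟨hmax, -⟩ | ⟨hmax, -⟩ <;>
          rw [hmax]
        · exact hb1
        · exact hb2
      have h9 : φ (K * B (j+1)) ≤ φ (max (κ * B j) ((κ/Λ) * ρ (2 * C / f j))) := by
        apply hφle (mul_pos hKpos (hBpos (j+1)))
        exact h2
      linarith
    -- covering: for every large t we get the lower bound c / ρ t
    have hBgeo : ∀ j, (2:ℝ)^j ≤ B j := by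
      intro j
      induction j with
      | zero => rw [hB0]; norm_num; linarith
      | succ j ih =>
        calc (2:ℝ)^(j+1) = 2 * 2^j := by rw [pow_succ]; ring
          _ ≤ 2 * B j := by linarith
          _ ≤ B (j+1) := hB2 j
    set T₁ : ℝ := max (A 1) 1 with hT₁
    have hcov : ∀ t : ℝ, T₁ ≤ t → c ≤ ρ t * psiA Θ α t := by
      intro t ht
      have ht1 : (1:ℝ) ≤ t := (le_max_right _ _).trans ht
      have htpos : (0:ℝ) < t := lt_of_lt_of_le one_pos ht1
      have htA1 : A 1 ≤ t := (le_max_left _ _).trans ht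
      have hfind : ∃ k : ℕ, t < A (k+1) := by
        obtain ⟨M, hM⟩ := eventually_atTop.1 (hφtop.eventually_gt_atTop t)
        obtain ⟨k, hk⟩ := pow_unbounded_of_one_lt (max M 1 / K) (one_lt_two (α := ℝ))
        refine ⟨k, ?_⟩
        have h1 : max M 1 / K < 2^k := hk
        have h2 : max M 1 < K * 2^k := by
          rw [div_lt_iff₀ hKpos] at h1
          linarith [h1]
        have h3 : K * 2^k ≤ K * B k := by
          apply mul_le_mul_of_nonneg_left (hBgeo k) hKpos.le
        have h4 : K * B k ≤ K * H (k+1) := by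
          apply mul_le_mul_of_nonneg_left (hHup k).le hKpos.le
        have h5 : M ≤ K * H (k+1) := by
          calc M ≤ max M 1 := le_max_left _ _
            _ ≤ K * H (k+1) := by linarith
        exact hM _ h5
      set k₀ := Nat.find hfind with hk₀def
      have hk₀spec : t < A (k₀+1) := Nat.find_spec hfind
      have hk₀ne : k₀ ≠ 0 := by
        intro h0
        rw [h0] at hk₀spec
        exact absurd htA1 (not_le.2 hk₀spec)
      obtain ⟨j, hj⟩ : ∃ j, k₀ = j + 1 := ⟨k₀ - 1, (Nat.succ_pred_eq_of_pos (Nat.pos_of_ne_zero hk₀ne)).symm⟩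
      have hAk₀ : A k₀ ≤ t := by
        have := Nat.find_min hfind (show k₀ - 1 < k₀ from Nat.pred_lt hk₀ne)
        rw [show k₀ - 1 + 1 = k₀ from Nat.succ_pred_eq_of_pos (Nat.pos_of_ne_zero hk₀ne)] at this
        exact not_lt.1 this
      have hρt : K * H k₀ ≤ ρ t := hρge (hKH k₀) hAk₀
      have hρtpos : 0 < ρ t := hρpos t htpos
      have htf : t ≤ δ / (2 * m * f k₀) := by
        have h1 := hchain k₀
        linarith
      have hψ : c / ρ t ≤ psiA Θ α t := by
        apply psiA_ge hm Θ α ht1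
        intro x hx hxt
        set ε := ⨆ j', distInt (lform Θ x j' - α j') with hε
        have hεnn : 0 ≤ ε := Real.iSup_nonneg (fun _ => distInt_nonneg _)
        have htr := transfer hm hn Θ α (v k₀) x
        rw [(hvspec k₀).2.2] at htr
        have hpro : δ ≤ distInt (∑ i, (v k₀ i : ℝ) * α i) := by
          rw [hj]
          exact hprotα j
        have hm1 : (1:ℝ) ≤ m := by exact_mod_cast hm
        have hfk := hfpos k₀
        have h2 : (m:ℝ) * supAbs x * f k₀ ≤ δ / 2 := by
          have hsx : supAbs x ≤ t := hxt
          have h3 : (m:ℝ) * supAbs x * f k₀ ≤ m * t * f k₀ := by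
            apply mul_le_mul_of_nonneg_right _ hfk.le
            apply mul_le_mul_of_nonneg_left hsx (by positivity)
          have h4 : (m:ℝ) * t * f k₀ ≤ δ / 2 := by
            have h2mf : (0:ℝ) < 2 * (m:ℝ) * f k₀ := mul_pos (by linarith) hfk
            rw [le_div_iff₀ h2mf] at htf
            calc (m:ℝ) * t * f k₀ = t * (2 * m * f k₀) / 2 := by ring
              _ ≤ δ / 2 := by linarith
          linarith
        have h5 : δ ≤ δ / 2 + n * H k₀ * ε := by
          have := hpro.trans htr
          have hHk : H k₀ = supAbs (v k₀) := rfl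
          rw [← hHk] at this
          linarith
        have h6 : δ / (2 * (n * H k₀)) ≤ ε := by
          have hnH : (0:ℝ) < (n:ℝ) * H k₀ := mul_pos (by exact_mod_cast hn) (hHpos k₀)
          rw [div_le_iff₀ (by linarith : (0:ℝ) < 2 * ((n:ℝ) * H k₀))]
          nlinarith
        have h7 : c / ρ t ≤ c / (K * H k₀) := by
          apply div_le_div_of_nonneg_left hcpos.le (hKH k₀) hρt
        have h8 : c / (K * H k₀) = δ / (2 * (n * H k₀)) := by
          rw [div_mul_eq_div_div, hcK]
          rw [div_div, div_div]
          rw [hδ]; ring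
        rw [hε] at h6 ⊢
        calc c / ρ t ≤ c / (K * H k₀) := h7
          _ = δ / (2 * (n * H k₀)) := h8
          _ ≤ _ := h6
      calc c = (c / ρ t) * ρ t := by field_simp
        _ ≤ psiA Θ α t * ρ t := mul_le_mul_of_nonneg_right hψ hρtpos.le
        _ = ρ t * psiA Θ α t := mul_comm _ _
    -- conclusion
    refine ⟨α, ?_⟩
    have hev : ∀ᶠ t in atTop, ENNReal.ofReal c ≤ ENNReal.ofReal (ρ t * psiA Θ α t) := by
      filter_upwards [eventually_ge_atTop T₁] with t ht
      exact ENNReal.ofReal_le_ofReal (hcov t ht)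
    calc (0:ENNReal) < ENNReal.ofReal c := ENNReal.ofReal_pos.2 hcpos
      _ = Filter.liminf (fun _ : ℝ => ENNReal.ofReal c) Filter.atTop :=
          (Filter.liminf_const _).symm
      _ ≤ _ := Filter.liminf_le_liminf hev
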